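/- Let J be a finite index set and let (X_j)_{j∈J} be independent real random variables with X_j Gaussian with mean μ_j and variance σ_j² ≥ 0. Then for all u ∈ ℝ and all reals (β_j)_{j∈J}, E[Φ(u + Σ_{j∈J} β_j X_j)] = Φ((u + Σ_{j∈J} β_j μ_j)/√(1 + Σ_{j∈J} β_j² σ_j²)). -/

import Mathlib

open MeasureTheory ProbabilityTheory Real
open scoped NNReal ENNReal

/-- The standard normal CDF `Φ(t) = (2π)^{-1/2} ∫_{-∞}^t e^{-s²/2} ds`. -/
noncomputable def stdNormalCDF (t : ℝ) : ℝ :=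
  ∫ s in Set.Iic t, Real.exp (-s ^ 2 / 2) / Real.sqrt (2 * Real.pi)

lemma gaussianPDFReal_mul' (m1 m2 : ℝ) (c v : ℝ≥0) (hc : c ≠ 0) (hv : v ≠ 0) (t x : ℝ) :
    gaussianPDFReal m1 c x * gaussianPDFReal m2 v (t - x) =
      gaussianPDFReal (m1 + m2) (c + v) t *
        gaussianPDFReal (m1 + (c : ℝ) * (t - m1 - m2) / ((c : ℝ) + v)) (c * v / (c + v)) x := by
  have hc' : (0:ℝ) < c := NNReal.coe_pos.mpr (pos_iff_ne_zero.mpr hc)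
  have hv' : (0:ℝ) < v := NNReal.coe_pos.mpr (pos_iff_ne_zero.mpr hv)
  have hcv : (0:ℝ) < (c:ℝ) + v := by linarith
  have hw : ((c * v / (c + v) : ℝ≥0) : ℝ) = (c:ℝ) * v / ((c:ℝ) + v) := by
    push_cast
    ring
  simp only [gaussianPDFReal, hw, NNReal.coe_add]
  rw [mul_mul_mul_comm, mul_mul_mul_comm ((√(2 * π * ((c:ℝ) + v)))⁻¹), ← Real.exp_add,
    ← Real.exp_add, ← mul_inv, ← mul_inv, ← Real.sqrt_mul (by positivity), ← Real.sqrt_mul (by positivity)]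
  congr 2
  · congr 1
    field_simp
  · field_simp
    ring

lemma lintegral_gaussianPDF_conv (m1 m2 : ℝ) (c v : ℝ≥0) (hc : c ≠ 0) (hv : v ≠ 0) (t : ℝ) :
    ∫⁻ x, gaussianPDF m1 c x * gaussianPDF m2 v (t - x) = gaussianPDF (m1 + m2) (c + v) t := by
  have hw : (c * v / (c + v) : ℝ≥0) ≠ 0 := by
    simp [div_eq_zero_iff, hc, hv]
  calc ∫⁻ x, gaussianPDF m1 c x * gaussianPDF m2 v (t - x)
      = ∫⁻ x, gaussianPDF (m1 + m2) (c + v) t *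
          gaussianPDF (m1 + (c : ℝ) * (t - m1 - m2) / ((c : ℝ) + v)) (c * v / (c + v)) x := by
        congr 1
        ext x
        rw [gaussianPDF, gaussianPDF, gaussianPDF, gaussianPDF,
          ← ENNReal.ofReal_mul (gaussianPDFReal_nonneg _ _ _),
          ← ENNReal.ofReal_mul (gaussianPDFReal_nonneg _ _ _),
          gaussianPDFReal_mul' m1 m2 c v hc hv t x]
    _ = gaussianPDF (m1 + m2) (c + v) t := by
        rw [lintegral_const_mul _ (measurable_gaussianPDF _ _),
          lintegral_gaussianPDF_eq_one _ hw, mul_one]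

lemma gaussianReal_conv (m1 m2 : ℝ) (c v : ℝ≥0) :
    ((gaussianReal m1 c).prod (gaussianReal m2 v)).map (fun p : ℝ × ℝ => p.1 + p.2)
      = gaussianReal (m1 + m2) (c + v) := by
  by_cases hc : c = 0
  · subst hc
    rw [gaussianReal_zero_var, zero_add, Measure.dirac_prod,
      Measure.map_map measurable_add measurable_prodMk_left]
    have : ((fun p : ℝ × ℝ => p.1 + p.2) ∘ Prod.mk m1) = (fun y => m1 + y) := rfl
    rw [this, gaussianReal_map_const_add, add_comm]
  by_cases hv : v = 0
  · subst hv
    rw [gaussianReal_zero_var, add_zero, Measure.prod_dirac,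
      Measure.map_map measurable_add measurable_prodMk_right]
    have : ((fun p : ℝ × ℝ => p.1 + p.2) ∘ (fun x => (x, m2))) = (fun y => y + m2) := rfl
    rw [this, gaussianReal_map_add_const]
  -- main case
  ext s hs
  rw [Measure.map_apply measurable_add hs,
    Measure.prod_apply (measurable_add hs)]
  have hind : ∀ x : ℝ, (gaussianReal m2 v) (Prod.mk x ⁻¹' ((fun p : ℝ × ℝ => p.1 + p.2) ⁻¹' s))
      = ∫⁻ t, s.indicator 1 t * gaussianPDF m2 v (t - x) := by
    intro x
    have hpre : MeasurableSet ((fun y => x + y) ⁻¹' s) := (measurable_const_add x) hs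
    have h1 : Prod.mk x ⁻¹' ((fun p : ℝ × ℝ => p.1 + p.2) ⁻¹' s) = (fun y => x + y) ⁻¹' s := rfl
    rw [h1, gaussianReal_of_var_ne_zero _ hv, withDensity_apply _ hpre,
      ← lintegral_indicator hpre]
    have h3 := (measurePreserving_add_left (volume : Measure ℝ) x).lintegral_comp
      (f := fun t => s.indicator 1 t * gaussianPDF m2 v (t - x))
      ((measurable_one.indicator hs).mul
        ((measurable_gaussianPDF m2 v).comp (measurable_sub_const x)))
    rw [← h3]
    congr 1
    ext y
    by_cases hy : x + y ∈ s
    · simp [Set.indicator, hy, Set.mem_preimage, add_sub_cancel_left]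
    · simp [Set.indicator, hy, Set.mem_preimage, add_sub_cancel_left]
  simp_rw [hind]
  have hmeas2 : Measurable fun p : ℝ × ℝ =>
      s.indicator (1 : ℝ → ℝ≥0∞) p.2 * (gaussianPDF m1 c p.1 * gaussianPDF m2 v (p.2 - p.1)) :=
    ((measurable_one.indicator hs).comp measurable_snd).mul
      (((measurable_gaussianPDF m1 c).comp measurable_fst).mul
        ((measurable_gaussianPDF m2 v).comp (measurable_snd.sub measurable_fst)))
  calc ∫⁻ x, (∫⁻ t, s.indicator 1 t * gaussianPDF m2 v (t - x)) ∂(gaussianReal m1 c)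
      = ∫⁻ x, gaussianPDF m1 c x * ∫⁻ t, s.indicator 1 t * gaussianPDF m2 v (t - x) := by
        rw [gaussianReal_of_var_ne_zero _ hc,
          lintegral_withDensity_eq_lintegral_mul _ (measurable_gaussianPDF m1 c)
            (Measurable.lintegral_prod_right
              (((measurable_one.indicator hs).comp measurable_snd).mul
                ((measurable_gaussianPDF m2 v).comp (measurable_snd.sub measurable_fst))))]
        rfl
    _ = ∫⁻ x, ∫⁻ t, s.indicator 1 t * (gaussianPDF m1 c x * gaussianPDF m2 v (t - x)) := by
        congr 1; ext x
        rw [← lintegral_const_mul' _ _ (show gaussianPDF m1 c x ≠ ⊤ by simp [gaussianPDF])]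
        congr 1; ext t; ring
    _ = ∫⁻ t, ∫⁻ x, s.indicator 1 t * (gaussianPDF m1 c x * gaussianPDF m2 v (t - x)) := by
        exact lintegral_lintegral_swap hmeas2.aemeasurable
    _ = ∫⁻ t, s.indicator 1 t * gaussianPDF (m1 + m2) (c + v) t := by
        congr 1; ext t
        rw [lintegral_const_mul' _ _ (by
            by_cases ht : t ∈ s <;> simp [Set.indicator, ht]),
          lintegral_gaussianPDF_conv m1 m2 c v hc hv t]
    _ = gaussianReal (m1 + m2) (c + v) s := by
        rw [gaussianReal_of_var_ne_zero _ (by simp [hc]), withDensity_apply _ hs,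
          ← lintegral_indicator hs]
        congr 1; ext t
        by_cases ht : t ∈ s <;> simp [Set.indicator, ht]

lemma map_sum_gaussianReal {Ω : Type*} [MeasurableSpace Ω] (P : Measure Ω)
    [IsProbabilityMeasure P] {J : Type*} (Y : J → Ω → ℝ) (hY : ∀ j, Measurable (Y j))
    (hindep : iIndepFun Y P) (m : J → ℝ) (w : J → ℝ≥0)
    (hd : ∀ j, P.map (Y j) = gaussianReal (m j) (w j)) (s : Finset J) :
    P.map (fun ω => ∑ j ∈ s, Y j ω) = gaussianReal (∑ j ∈ s, m j) (∑ j ∈ s, w j) := by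
  classical
  induction s using Finset.induction_on with
  | empty =>
      simp only [Finset.sum_empty]
      rw [gaussianReal_zero_var, Measure.map_const, measure_univ, one_smul]
  | insert k t hk ih =>
      have hS : Measurable fun ω => ∑ j ∈ t, Y j ω := by
        exact Finset.measurable_sum t (fun j _ => hY j)
      have hSind : IndepFun (∑ j ∈ t, Y j) (Y k) P :=
        hindep.indepFun_finsetSum_of_notMem hY hk
      have hSind' : IndepFun (fun ω => ∑ j ∈ t, Y j ω) (Y k) P := by
        have : (∑ j ∈ t, Y j) = fun ω => ∑ j ∈ t, Y j ω := by
          ext ω; simp [Finset.sum_apply]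
        rwa [this] at hSind
      have hpair : P.map (fun ω => ((∑ j ∈ t, Y j ω), Y k ω))
          = (P.map (fun ω => ∑ j ∈ t, Y j ω)).prod (P.map (Y k)) :=
        (indepFun_iff_map_prod_eq_prod_map_map hS.aemeasurable (hY k).aemeasurable).mp hSind'
      have hcomp : (fun ω => ∑ j ∈ insert k t, Y j ω)
          = (fun p : ℝ × ℝ => p.1 + p.2) ∘ (fun ω => ((∑ j ∈ t, Y j ω), Y k ω)) := by
        ext ω
        simp [Finset.sum_insert hk, add_comm]
      rw [hcomp, ← Measure.map_map measurable_add (hS.prodMk (hY k)), hpair, ih, hd k,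
        gaussianReal_conv, Finset.sum_insert hk, Finset.sum_insert hk, add_comm (m k),
        add_comm (w k)]

lemma stdNormalCDF_eq (t : ℝ) : stdNormalCDF t = ∫ s in Set.Iic t, gaussianPDFReal 0 1 s := by
  unfold stdNormalCDF gaussianPDFReal
  congr 1
  ext s
  rw [div_eq_inv_mul]
  norm_num

lemma stdNormalCDF_nonneg (t : ℝ) : 0 ≤ stdNormalCDF t := by
  rw [stdNormalCDF_eq]
  exact setIntegral_nonneg measurableSet_Iic (fun x _ => gaussianPDFReal_nonneg 0 1 x)

lemma gaussianReal_Iic (m : ℝ) {v : ℝ≥0} (hv : v ≠ 0) (u : ℝ) :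
    gaussianReal m v (Set.Iic u)
      = ENNReal.ofReal (stdNormalCDF ((u - m) / Real.sqrt v)) := by
  have hv' : (0:ℝ) < v := NNReal.coe_pos.mpr (pos_iff_ne_zero.mpr hv)
  have hsv : (0:ℝ) < Real.sqrt v := Real.sqrt_pos.mpr hv'
  have h1 : gaussianReal m v = (gaussianReal 0 1).map (fun x => Real.sqrt v * x + m) := by
    have h2 : (gaussianReal 0 1).map (fun x => Real.sqrt v * x) = gaussianReal 0 v := by
      rw [gaussianReal_map_const_mul]
      congr 1
      · ring
      · ext
        simp [Real.sq_sqrt hv'.le]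
    have h3 : (fun x => Real.sqrt v * x + m) = (fun y => y + m) ∘ (fun x => Real.sqrt v * x) := rfl
    rw [h3, ← Measure.map_map (measurable_add_const m) (measurable_const_mul _), h2,
      gaussianReal_map_add_const, zero_add]
  rw [h1, Measure.map_apply (by fun_prop) measurableSet_Iic]
  have h4 : (fun x => Real.sqrt v * x + m) ⁻¹' Set.Iic u
      = Set.Iic ((u - m) / Real.sqrt v) := by
    ext x
    simp only [Set.mem_preimage, Set.mem_Iic]
    rw [le_div_iff₀ hsv]
    constructor <;> intro h <;> nlinarith
  rw [h4, gaussianReal_apply_eq_integral 0 one_ne_zero, stdNormalCDF_eq]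

lemma integral_stdNormalCDF_gaussianReal (M : ℝ) (V : ℝ≥0) (u : ℝ) :
    ∫ y, stdNormalCDF (u + y) ∂(gaussianReal M V)
      = stdNormalCDF ((u + M) / Real.sqrt (1 + (V:ℝ))) := by
  have hΦ : ∀ t : ℝ, stdNormalCDF t = (gaussianReal 0 1 (Set.Iic t)).toReal := by
    intro t
    rw [gaussianReal_Iic 0 one_ne_zero t, ENNReal.toReal_ofReal (stdNormalCDF_nonneg _)]
    norm_num
  have hmono : Monotone fun y : ℝ => gaussianReal 0 1 (Set.Iic (u + y)) := by
    intro a b hab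
    exact measure_mono (Set.Iic_subset_Iic.mpr (by linarith))
  have hmeas : Measurable fun y : ℝ => gaussianReal 0 1 (Set.Iic (u + y)) :=
    hmono.measurable
  calc ∫ y, stdNormalCDF (u + y) ∂(gaussianReal M V)
      = ∫ y, (gaussianReal 0 1 (Set.Iic (u + y))).toReal ∂(gaussianReal M V) := by
        simp_rw [hΦ]
    _ = (∫⁻ y, gaussianReal 0 1 (Set.Iic (u + y)) ∂(gaussianReal M V)).toReal := by
        rw [integral_toReal hmeas.aemeasurable]
        exact Filter.Eventually.of_forall fun y => measure_lt_top _ _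
    _ = (((gaussianReal M V).prod (gaussianReal 0 1))
          ((fun p : ℝ × ℝ => p.2 - p.1) ⁻¹' Set.Iic u)).toReal := by
        rw [Measure.prod_apply ((by fun_prop : Measurable fun p : ℝ × ℝ => p.2 - p.1) measurableSet_Iic)]
        congr 1
        refine lintegral_congr fun y => ?_
        congr 1
        ext x
        simp only [Set.mem_preimage, Set.mem_Iic, Set.mem_setOf_eq]
        constructor <;> intro h <;> linarith
    _ = ((((gaussianReal M V).prod (gaussianReal 0 1)).map
          (fun p : ℝ × ℝ => p.2 - p.1)) (Set.Iic u)).toReal := by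
        rw [Measure.map_apply (by fun_prop : Measurable fun p : ℝ × ℝ => p.2 - p.1) measurableSet_Iic]
    _ = (gaussianReal (-M) (V + 1) (Set.Iic u)).toReal := by
        congr 2
        have hswap : ((gaussianReal M V).prod (gaussianReal 0 1)).map Prod.swap
            = (gaussianReal 0 1).prod (gaussianReal M V) := Measure.prod_swap
        have hneg : (gaussianReal M V).map (fun y : ℝ => -y) = gaussianReal (-M) V := by
          have : (fun y : ℝ => -y) = fun y : ℝ => (-1 : ℝ) * y := by ext y; ring
          rw [this, gaussianReal_map_const_mul]
          congr 1
          · ring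
          · ext; norm_num
        have hmap2 : ((gaussianReal 0 1).prod (gaussianReal M V)).map
            (Prod.map (id : ℝ → ℝ) (fun y : ℝ => -y))
            = (gaussianReal 0 1).prod (gaussianReal (-M) V) := by
          rw [← hneg, ← Measure.map_prod_map _ _ measurable_id measurable_neg,
            Measure.map_id]
        have hcomp : (fun p : ℝ × ℝ => p.2 - p.1)
            = (fun p : ℝ × ℝ => p.1 + p.2) ∘ (Prod.map (id : ℝ → ℝ) (fun y : ℝ => -y))
              ∘ Prod.swap := by
          ext p
          simp [sub_eq_add_neg, add_comm]
        rw [hcomp, ← Function.comp_assoc,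
          ← Measure.map_map (measurable_add.comp ((measurable_id.prodMap measurable_neg)))
            measurable_swap,
          hswap,
          ← Measure.map_map measurable_add (measurable_id.prodMap measurable_neg),
          hmap2, gaussianReal_conv, zero_add, add_comm V 1]
    _ = stdNormalCDF ((u + M) / Real.sqrt (1 + (V:ℝ))) := by
        rw [gaussianReal_Iic (-M) (by simp) u, ENNReal.toReal_ofReal (stdNormalCDF_nonneg _)]
        congr 2
        · ring
        · push_cast; ring


/-- Independent-covariates specialization of Theorem 1: if `(X_j)_{j∈J}` are independent
with `X_j ~ N(μ_j, σ_j²)`, then for all `u` and `(β_j)`,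
`E[Φ(u + Σ_j β_j X_j)] = Φ((u + Σ_j β_j μ_j)/√(1 + Σ_j β_j² σ_j²))`. -/
theorem probit_indep_gaussian_expectation {Ω : Type*} [MeasurableSpace Ω]
    (P : Measure Ω) [IsProbabilityMeasure P]
    {J : Type*} [Fintype J]
    (X : J → Ω → ℝ) (hX : ∀ j, Measurable (X j))
    (hindep : iIndepFun X P)
    (μ : J → ℝ) (v : J → ℝ≥0)
    (hdist : ∀ j, P.map (X j) = gaussianReal (μ j) (v j))
    (u : ℝ) (β : J → ℝ) :
    ∫ ω, stdNormalCDF (u + ∑ j, β j * X j ω) ∂P =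
      stdNormalCDF ((u + ∑ j, β j * μ j) /
        Real.sqrt (1 + ∑ j, (β j) ^ 2 * ((v j : ℝ)))) := by
  classical
  set Y : J → Ω → ℝ := fun j ω => β j * X j ω with hYdef
  have hYmeas : ∀ j, Measurable (Y j) := fun j => (hX j).const_mul (β j)
  have hYindep : iIndepFun Y P :=
    hindep.comp (fun j => fun x : ℝ => β j * x) (fun j => measurable_const_mul (β j))
  have hYdist : ∀ j, P.map (Y j)
      = gaussianReal (β j * μ j) (⟨(β j)^2, sq_nonneg _⟩ * v j) := by
    intro j
    have h : Y j = (fun x : ℝ => β j * x) ∘ X j := rfl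
    rw [h, ← Measure.map_map (measurable_const_mul (β j)) (hX j), hdist j,
      gaussianReal_map_const_mul]
    rfl
  have hsum := map_sum_gaussianReal P Y hYmeas hYindep _ _ hYdist Finset.univ
  have hS : Measurable fun ω => ∑ j, Y j ω := Finset.measurable_sum _ fun j _ => hYmeas j
  have hΦmono : Monotone stdNormalCDF := by
    intro a b hab
    rw [stdNormalCDF_eq, stdNormalCDF_eq]
    refine setIntegral_mono_set ((integrable_gaussianPDFReal 0 1).integrableOn) ?_ ?_
    · exact Filter.Eventually.of_forall fun x => gaussianPDFReal_nonneg 0 1 x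
    · exact Filter.Eventually.of_forall (Set.Iic_subset_Iic.mpr hab)
  have key : ∫ ω, stdNormalCDF (u + ∑ j, β j * X j ω) ∂P
      = ∫ y, stdNormalCDF (u + y) ∂(P.map (fun ω => ∑ j, Y j ω)) := by
    have hg : Measurable fun y : ℝ => stdNormalCDF (u + y) :=
      hΦmono.measurable.comp (measurable_const_add u)
    rw [integral_map hS.aemeasurable hg.aestronglyMeasurable]
  rw [key, hsum, integral_stdNormalCDF_gaussianReal]
  congr 2
  rw [NNReal.coe_sum]
  push_cast [NNReal.coe_mk]
  rfl
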